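/- Let (v_k) be a sequence in ℝ³ with Euclidean norm ‖v_k‖ = 1 converging to v, let t_k → +∞ be real numbers with t_k·|q(v_k)| → +∞, and let ε ∈ {−1, +1} be such that ε·q(v_k) ≥ 0 for all k. Let x ∈ ℝ³ satisfy ε·q(x) > 0 and b(x,v) > 0, and let x_k → x in ℝ³. For u ∈ [0,1] set D_k(u) = 1 + t_k·u·b(x_k, v_k) + (t_k²·u²/4)·q(v_k)·q(x_k) and x_k(u) = D_k(u)⁻¹·(u·x_k + (t_k·u²·q(x_k)/2)·v_k). Then there exists K such that for all k ≥ K one has D_k(u) > 0 for every u ∈ [0,1], and moreover sup_{u ∈ [0,1]} ‖x_k(u)‖ → 0 as k → ∞. -/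

import Mathlib

open Filter Topology

noncomputable section

/-- The Lorentzian quadratic form `q(x) = 2x₁x₃ + x₂²` on Euclidean `ℝ³`. -/
def qE (x : EuclideanSpace ℝ (Fin 3)) : ℝ := 2 * x 0 * x 2 + (x 1) ^ 2

/-- The polar bilinear form `b(x,v) = x₁v₃ + x₂v₂ + x₃v₁` of `qE`. -/
def bE (x v : EuclideanSpace ℝ (Fin 3)) : ℝ := x 0 * v 2 + x 1 * v 1 + x 2 * v 0

/-- `D_k(u) = 1 + t·u·b(x,v) + (t²u²/4)·q(v)·q(x)`. -/
def Dk (t : ℝ) (x v : EuclideanSpace ℝ (Fin 3)) (u : ℝ) : ℝ :=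
  1 + t * u * bE x v + t ^ 2 * u ^ 2 / 4 * qE v * qE x

/-- `x_k(u) = D_k(u)⁻¹ · (u·x + (t·u²·q(x)/2)·v)`. -/
def Xk (t : ℝ) (x v : EuclideanSpace ℝ (Fin 3)) (u : ℝ) : EuclideanSpace ℝ (Fin 3) :=
  (Dk t x v u)⁻¹ • (u • x + (t * u ^ 2 * qE x / 2) • v)

lemma tend_coord {f : ℕ → EuclideanSpace ℝ (Fin 3)} {l : EuclideanSpace ℝ (Fin 3)}
    (h : Tendsto f atTop (𝓝 l)) (i : Fin 3) :
    Tendsto (fun k => f k i) atTop (𝓝 (l i)) := by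
  have := ((EuclideanSpace.proj (𝕜 := ℝ) (i := i)).continuous.tendsto l).comp h
  simpa [Function.comp_def] using this

lemma tend_qE {f : ℕ → EuclideanSpace ℝ (Fin 3)} {l : EuclideanSpace ℝ (Fin 3)}
    (h : Tendsto f atTop (𝓝 l)) :
    Tendsto (fun k => qE (f k)) atTop (𝓝 (qE l)) := by
  unfold qE
  exact (((tendsto_const_nhds.mul (tend_coord h 0)).mul (tend_coord h 2))).add
    ((tend_coord h 1).pow 2)

lemma tend_bE {f g : ℕ → EuclideanSpace ℝ (Fin 3)} {l m : EuclideanSpace ℝ (Fin 3)}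
    (h : Tendsto f atTop (𝓝 l)) (h' : Tendsto g atTop (𝓝 m)) :
    Tendsto (fun k => bE (f k) (g k)) atTop (𝓝 (bE l m)) := by
  unfold bE
  exact (((tend_coord h 0).mul (tend_coord h' 2)).add
    ((tend_coord h 1).mul (tend_coord h' 1))).add ((tend_coord h 2).mul (tend_coord h' 0))

lemma key (T b0 : ℝ) (x' v' : EuclideanSpace ℝ (Fin 3)) (hT : 1 ≤ T)
    (hb0 : 0 < b0) (hb : b0 ≤ bE x' v') (hc : 0 < qE v' * qE x') (hv1 : ‖v'‖ = 1)
    (u : ℝ) (hu0 : 0 ≤ u) (hu1 : u ≤ 1) :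
    0 < Dk T x' v' u ∧
    ‖Xk T x' v' u‖ ≤ ‖x'‖ / (T * b0) + 2 * |qE x'| / (T * (qE v' * qE x')) := by
  have hT0 : (0:ℝ) < T := by linarith
  have hbpos : 0 < bE x' v' := lt_of_lt_of_le hb0 hb
  have hD : 0 < Dk T x' v' u := by
    unfold Dk
    nlinarith [mul_nonneg (mul_nonneg hT0.le hu0) hbpos.le,
      mul_nonneg (mul_nonneg (sq_nonneg T) (sq_nonneg u)) hc.le]
  refine ⟨hD, ?_⟩
  have hnum : ‖u • x' + (T * u ^ 2 * qE x' / 2) • v'‖ ≤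
      u * ‖x'‖ + T * u ^ 2 * |qE x'| / 2 := by
    calc ‖u • x' + (T * u ^ 2 * qE x' / 2) • v'‖
        ≤ ‖u • x'‖ + ‖(T * u ^ 2 * qE x' / 2) • v'‖ := norm_add_le _ _
      _ = |u| * ‖x'‖ + |T * u ^ 2 * qE x' / 2| * ‖v'‖ := by
          rw [norm_smul, norm_smul, Real.norm_eq_abs, Real.norm_eq_abs]
      _ = u * ‖x'‖ + T * u ^ 2 * |qE x'| / 2 := by
          rw [hv1, abs_of_nonneg hu0, abs_div, abs_mul, abs_mul,
            abs_of_nonneg hT0.le, abs_of_nonneg (sq_nonneg u)]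
          norm_num
  have hXnorm : ‖Xk T x' v' u‖ =
      ‖u • x' + (T * u ^ 2 * qE x' / 2) • v'‖ / Dk T x' v' u := by
    unfold Xk
    rw [norm_smul, Real.norm_eq_abs, abs_inv, abs_of_pos hD, inv_mul_eq_div]
  rw [hXnorm]
  have step1 : u * ‖x'‖ / Dk T x' v' u ≤ ‖x'‖ / (T * b0) := by
    rw [div_le_div_iff₀ hD (by positivity)]
    unfold Dk
    nlinarith [norm_nonneg x',
      mul_nonneg (mul_nonneg (mul_nonneg (norm_nonneg x') hT0.le) hu0) (sub_nonneg.2 hb),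
      mul_nonneg (norm_nonneg x')
        (mul_nonneg (mul_nonneg (sq_nonneg T) (sq_nonneg u)) hc.le)]
  have step2 : T * u ^ 2 * |qE x'| / 2 / Dk T x' v' u ≤
      2 * |qE x'| / (T * (qE v' * qE x')) := by
    rw [div_le_div_iff₀ hD (by positivity)]
    unfold Dk
    nlinarith [abs_nonneg (qE x'),
      mul_nonneg (abs_nonneg (qE x')) (mul_nonneg (mul_nonneg hT0.le hu0) hbpos.le)]
  calc ‖u • x' + (T * u ^ 2 * qE x' / 2) • v'‖ / Dk T x' v' u
      ≤ (u * ‖x'‖ + T * u ^ 2 * |qE x'| / 2) / Dk T x' v' u := by gcongr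
    _ = u * ‖x'‖ / Dk T x' v' u + T * u ^ 2 * |qE x'| / 2 / Dk T x' v' u := add_div _ _ _
    _ ≤ _ := add_le_add step1 step2

theorem stmt1 (v : EuclideanSpace ℝ (Fin 3)) (vk : ℕ → EuclideanSpace ℝ (Fin 3))
    (hnorm : ∀ k, ‖vk k‖ = 1)
    (hv : Tendsto vk atTop (𝓝 v))
    (t : ℕ → ℝ) (ht : Tendsto t atTop atTop)
    (htq : Tendsto (fun k => t k * |qE (vk k)|) atTop atTop)
    (ε : ℝ) (hε : ε = 1 ∨ ε = -1) (hsign : ∀ k, 0 ≤ ε * qE (vk k))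
    (x : EuclideanSpace ℝ (Fin 3)) (hx : 0 < ε * qE x) (hbxv : 0 < bE x v)
    (xk : ℕ → EuclideanSpace ℝ (Fin 3)) (hxk : Tendsto xk atTop (𝓝 x)) :
    (∃ K : ℕ, ∀ k ≥ K, ∀ u ∈ Set.Icc (0:ℝ) 1, 0 < Dk (t k) (xk k) (vk k) u) ∧
    Tendsto (fun k => ⨆ u : Set.Icc (0:ℝ) 1, ‖Xk (t k) (xk k) (vk k) (u : ℝ)‖)
      atTop (𝓝 0) := by
  -- `q(vₖ) = ε * |q(vₖ)|`
  have hqv : ∀ k, qE (vk k) = ε * |qE (vk k)| := by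
    intro k
    have h1 := hsign k
    rcases hε with h | h
    · rw [h, one_mul] at h1 ⊢
      rw [abs_of_nonneg h1]
    · rw [h] at h1 ⊢
      have hq : qE (vk k) ≤ 0 := by linarith
      rw [abs_of_nonpos hq]; ring
  set b0 : ℝ := bE x v / 2 with hb0
  have hb0pos : 0 < b0 := by positivity
  set g : ℕ → ℝ := fun k => ‖xk k‖ / (t k * b0) +
      2 * |qE (xk k)| / (t k * |qE (vk k)| * (ε * qE (xk k))) with hg
  have E1 : ∀ᶠ k in atTop, 1 ≤ t k := ht.eventually_ge_atTop 1
  have E2 : ∀ᶠ k in atTop, b0 ≤ bE (xk k) (vk k) :=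
    ((tend_bE hxk hv).eventually_const_lt (by rw [hb0]; linarith)).mono fun k h => h.le
  have E3 : ∀ᶠ k in atTop, 0 < ε * qE (xk k) :=
    (tendsto_const_nhds.mul (tend_qE hxk)).eventually_const_lt hx
  have E4 : ∀ᶠ k in atTop, 1 ≤ t k * |qE (vk k)| := htq.eventually_ge_atTop 1
  have main : ∀ᶠ k in atTop, (∀ u ∈ Set.Icc (0:ℝ) 1, 0 < Dk (t k) (xk k) (vk k) u) ∧
      (⨆ u : Set.Icc (0:ℝ) 1, ‖Xk (t k) (xk k) (vk k) (u : ℝ)‖) ≤ g k := by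
    filter_upwards [E1, E2, E3, E4] with k h1 h2 h3 h4
    have hqvne : qE (vk k) ≠ 0 := by
      intro h; rw [h] at h4; simp at h4; linarith
    have hqvpos : 0 < |qE (vk k)| := abs_pos.mpr hqvne
    have hcpos : 0 < qE (vk k) * qE (xk k) := by
      rw [hqv k]
      have heq : ε * |qE (vk k)| * qE (xk k) = |qE (vk k)| * (ε * qE (xk k)) := by ring
      rw [heq]
      exact mul_pos hqvpos h3
    have hTc : t k * |qE (vk k)| * (ε * qE (xk k)) =
        t k * (qE (vk k) * qE (xk k)) := by
      conv_rhs => rw [hqv k]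
      ring
    have hkey := fun (u : ℝ) (hu0 : 0 ≤ u) (hu1 : u ≤ 1) =>
      key (t k) b0 (xk k) (vk k) h1 hb0pos h2 hcpos (hnorm k) u hu0 hu1
    constructor
    · rintro u ⟨hu0, hu1⟩; exact (hkey u hu0 hu1).1
    · have hne : Nonempty (Set.Icc (0:ℝ) 1) := ⟨⟨0, by norm_num⟩⟩
      apply ciSup_le
      rintro ⟨u, hu0, hu1⟩
      rw [hg]
      simp only
      rw [hTc]
      exact (hkey u hu0 hu1).2
  constructor
  · obtain ⟨K, hK⟩ := eventually_atTop.mp main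
    exact ⟨K, fun k hk => (hK k hk).1⟩
  · have hg0 : Tendsto g atTop (𝓝 0) := by
      have t1 : Tendsto (fun k => ‖xk k‖ / (t k * b0)) atTop (𝓝 0) :=
        (hxk.norm).div_atTop (ht.atTop_mul_const hb0pos)
      have t2 : Tendsto (fun k => 2 * |qE (xk k)| / (t k * |qE (vk k)| * (ε * qE (xk k))))
          atTop (𝓝 0) :=
        (tendsto_const_nhds.mul ((tend_qE hxk).abs)).div_atTop
          (htq.atTop_mul_pos hx (tendsto_const_nhds.mul (tend_qE hxk)))
      rw [hg]
      simpa only [add_zero] using t1.add t2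
    apply squeeze_zero' ?_ (main.mono fun k hk => hk.2) hg0
    filter_upwards with k
    exact Real.iSup_nonneg fun u => norm_nonneg _
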